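/- Let H ∈ ℝ^{n×n} be symmetric with smallest eigenvalue α₀, a ∈ ℝ with a + α₀ > ν²/4, ν > 0, and P = [[2I, νI], [νI, 2H + 2aI]]. Then c₁ P ≤ [[I, 0], [0, H + (1−α₀)I]] ≤ c₂ P with c₁ = 1/(a + α₀ + 1 + √((a+α₀−1)² + ν²)) and c₂ = (a + α₀ + 1 + √((a+α₀−1)² + ν²))/(4(a+α₀) − ν²). -/

import Mathlib

open Matrix

lemma shift_psd {n : ℕ} {H : Matrix (Fin n) (Fin n) ℝ} (hH : H.IsHermitian) (α₀ : ℝ)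
    (hlb : ∀ i, α₀ ≤ hH.eigenvalues i) : (H - α₀ • 1).PosSemidef := by
  have hse := hH.spectral_theorem
  simp only [Unitary.conjStarAlgAut_apply, Unitary.coe_star] at hse
  set U : Matrix (Fin n) (Fin n) ℝ := (hH.eigenvectorUnitary : Matrix (Fin n) (Fin n) ℝ) with hUdef
  have hUU : U * star U = 1 := Matrix.mem_unitaryGroup_iff.mp hH.eigenvectorUnitary.2
  have hkey : H - α₀ • 1 = U * (Matrix.diagonal (fun i => hH.eigenvalues i - α₀)) * star U := by
    have hdiag : Matrix.diagonal (fun i => hH.eigenvalues i - α₀)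
        = Matrix.diagonal (RCLike.ofReal ∘ hH.eigenvalues) - α₀ • (1 : Matrix (Fin n) (Fin n) ℝ) := by
      ext i j
      by_cases h : i = j <;> simp [h, Matrix.one_apply, Matrix.diagonal]
    rw [hdiag, Matrix.mul_sub, Matrix.sub_mul, ← hse, Matrix.mul_smul, Matrix.smul_mul, mul_one,
      hUU]
  rw [hkey, Matrix.star_eq_conjTranspose U]
  exact (Matrix.PosSemidef.diagonal (fun i => sub_nonneg.mpr (hlb i))).mul_mul_conjTranspose_same U

lemma block_psd {n : ℕ} {α β γ δ : ℝ} {M : Matrix (Fin n) (Fin n) ℝ} (hM : M.PosSemidef)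
    (hα : 0 ≤ α) (hγ : 0 ≤ γ) (hδ : 0 ≤ δ) (hd : β ^ 2 ≤ α * γ) :
    (Matrix.fromBlocks (α • (1 : Matrix (Fin n) (Fin n) ℝ)) (β • 1) (β • 1)
      (γ • (1 : Matrix (Fin n) (Fin n) ℝ) + δ • M)).PosSemidef := by
  rw [Matrix.posSemidef_iff_dotProduct_mulVec]
  constructor
  · rw [Matrix.IsHermitian, Matrix.fromBlocks_conjTranspose]
    have hMt : Mᵀ = M := by rw [← Matrix.conjTranspose_eq_transpose_of_trivial]; exact hM.1.eq
    simp [Matrix.conjTranspose_smul, hMt]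
  · intro x
    set u : Fin n → ℝ := x ∘ Sum.inl with hu
    set v : Fin n → ℝ := x ∘ Sum.inr with hv
    have hx : x = Sum.elim u v := (Sum.elim_comp_inl_inr x).symm
    have hstar : star x = Sum.elim u v := by rw [star_trivial, hx]
    rw [Matrix.fromBlocks_mulVec, hstar, ← hu, ← hv]
    rw [sumElim_dotProduct_sumElim]
    simp only [Matrix.smul_mulVec, Matrix.one_mulVec, Matrix.add_mulVec,
      dotProduct_add, dotProduct_smul, smul_eq_mul]
    have hm : 0 ≤ v ⬝ᵥ (M *ᵥ v) := by
      have := hM.dotProduct_mulVec_nonneg v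
      rwa [star_trivial] at this
    have hA : 0 ≤ u ⬝ᵥ u := Finset.sum_nonneg fun i _ => mul_self_nonneg _
    have hC : 0 ≤ v ⬝ᵥ v := Finset.sum_nonneg fun i _ => mul_self_nonneg _
    have hvu : v ⬝ᵥ u = u ⬝ᵥ v := dotProduct_comm v u
    have hB2 : (u ⬝ᵥ v) ^ 2 ≤ (u ⬝ᵥ u) * (v ⬝ᵥ v) := by
      have := Finset.sum_mul_sq_le_sq_mul_sq Finset.univ u v
      simpa [dotProduct, sq] using this
    set A := u ⬝ᵥ u
    set B := u ⬝ᵥ v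
    set C := v ⬝ᵥ v
    have hprod : β ^ 2 * B ^ 2 ≤ (α * γ) * (A * C) :=
      mul_le_mul hd hB2 (sq_nonneg B) (mul_nonneg hα hγ)
    have key : (2 * β * B) ^ 2 ≤ (α * A + γ * C) ^ 2 := by
      nlinarith [sq_nonneg (α * A - γ * C)]
    have ht : 0 ≤ α * A + γ * C := add_nonneg (mul_nonneg hα hA) (mul_nonneg hγ hC)
    have hq : 0 ≤ α * A + 2 * β * B + γ * C := by nlinarith [key, ht]
    rw [hvu]
    nlinarith [mul_nonneg hδ hm, hq]

/-- Two-sided matrix inequality between `diag(I, H + (1-α₀)I)` and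
`P = [[2I, νI], [νI, 2H + 2aI]]` with explicit constants `c₁, c₂`. -/
theorem stmt9 (n : ℕ) (ν α₀ a : ℝ) (hν : 0 < ν)
    (H : Matrix (Fin n) (Fin n) ℝ) (hH : H.IsHermitian)
    (hlb : ∀ i, α₀ ≤ hH.eigenvalues i) (hmin : ∃ i, hH.eigenvalues i = α₀)
    (haα : ν ^ 2 / 4 < a + α₀) :
    let P := Matrix.fromBlocks ((2 : ℝ) • (1 : Matrix (Fin n) (Fin n) ℝ)) (ν • 1) (ν • 1)
      ((2 : ℝ) • H + (2 * a) • 1)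
    let Dg := Matrix.fromBlocks (1 : Matrix (Fin n) (Fin n) ℝ) 0 0 (H + (1 - α₀) • 1)
    let c₁ := 1 / (a + α₀ + 1 + Real.sqrt ((a + α₀ - 1) ^ 2 + ν ^ 2))
    let c₂ := (a + α₀ + 1 + Real.sqrt ((a + α₀ - 1) ^ 2 + ν ^ 2)) / (4 * (a + α₀) - ν ^ 2)
    (Dg - c₁ • P).PosSemidef ∧ (c₂ • P - Dg).PosSemidef := by
  intro P Dg c₁ c₂
  have hMpsd : (H - α₀ • 1).PosSemidef := shift_psd hH α₀ hlb
  have hr0 : 0 ≤ Real.sqrt ((a + α₀ - 1) ^ 2 + ν ^ 2) := Real.sqrt_nonneg _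
  have hr2 : Real.sqrt ((a + α₀ - 1) ^ 2 + ν ^ 2) ^ 2 = (a + α₀ - 1) ^ 2 + ν ^ 2 :=
    Real.sq_sqrt (by positivity)
  set r := Real.sqrt ((a + α₀ - 1) ^ 2 + ν ^ 2) with hrdef
  have hs : 0 < a + α₀ := by nlinarith [sq_nonneg ν]
  have hge1 : a + α₀ - 1 ≤ r := by nlinarith [hr2, hr0, hν]
  have hge2 : 1 - (a + α₀) ≤ r := by nlinarith [hr2, hr0, hν]
  have hD : 0 < a + α₀ + 1 + r := by linarith
  have hE : 0 < 4 * (a + α₀) - ν ^ 2 := by linarith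
  have hc₁ : c₁ = 1 / (a + α₀ + 1 + r) := rfl
  have hc₂ : c₂ = (a + α₀ + 1 + r) / (4 * (a + α₀) - ν ^ 2) := rfl
  constructor
  · -- first inequality
    have hdD : c₁ * (a + α₀ + 1 + r) = 1 := by
      rw [hc₁]; field_simp
    have hd0 : 0 < c₁ := by rw [hc₁]; positivity
    have hα1 : 0 ≤ 1 - 2 * c₁ := by nlinarith [hd0, hdD, hge2]
    have hγ1 : 0 ≤ 1 - 2 * c₁ * (a + α₀) := by nlinarith [hd0, hdD, hge1]
    have heq : (1 - 2 * c₁) * (1 - 2 * c₁ * (a + α₀)) = (c₁ * ν) ^ 2 := by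
      linear_combination (2 * c₁ * (1 + a + α₀) - 1 - c₁ * (a + α₀ + 1 + r)) * hdD + c₁ ^ 2 * hr2
    have hd1 : (-(c₁ * ν)) ^ 2 ≤ (1 - 2 * c₁) * (1 - 2 * c₁ * (a + α₀)) := by
      rw [neg_pow]; simp; linarith [heq]
    have e1 : Dg - c₁ • P =
        Matrix.fromBlocks ((1 - 2 * c₁) • (1 : Matrix (Fin n) (Fin n) ℝ)) ((-(c₁ * ν)) • 1)
          ((-(c₁ * ν)) • 1)
          ((1 - 2 * c₁ * (a + α₀)) • (1 : Matrix (Fin n) (Fin n) ℝ) + (1 - 2 * c₁) • (H - α₀ • 1)) := by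
      show Matrix.fromBlocks (1 : Matrix (Fin n) (Fin n) ℝ) 0 0 (H + (1 - α₀) • 1)
          - c₁ • Matrix.fromBlocks ((2 : ℝ) • (1 : Matrix (Fin n) (Fin n) ℝ)) (ν • 1) (ν • 1)
            ((2 : ℝ) • H + (2 * a) • 1) = _
      ext i j
      rcases i with i | i <;> rcases j with j | j <;>
        simp [Matrix.fromBlocks, Matrix.one_apply, Matrix.sub_apply, Matrix.add_apply,
          Matrix.smul_apply, smul_eq_mul, Matrix.of_apply] <;>
        split_ifs <;> ring
    rw [e1]
    exact block_psd hMpsd hα1 hγ1 hα1 hd1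
  · -- second inequality
    have heE : c₂ * (4 * (a + α₀) - ν ^ 2) = a + α₀ + 1 + r := by
      rw [hc₂]; exact div_mul_cancel₀ _ hE.ne'
    have he0 : 0 < c₂ := by rw [hc₂]; positivity
    have hα2 : 0 ≤ 2 * c₂ - 1 := by nlinarith [heE, hE, hge1, sq_nonneg ν]
    have hsr : 0 ≤ (a + α₀) * (r - (1 - (a + α₀))) := mul_nonneg hs.le (by linarith)
    have hγ2 : 0 ≤ 2 * c₂ * (a + α₀) - 1 := by nlinarith [heE, hE, hsr, sq_nonneg ν]
    have hXE : ((2 * c₂ - 1) * (2 * c₂ * (a + α₀) - 1) - (c₂ * ν) ^ 2)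
        * (4 * (a + α₀) - ν ^ 2) = 0 := by
      linear_combination (c₂ * (4 * (a + α₀) - ν ^ 2) + (a + α₀ + 1 + r) - 2 * (1 + a + α₀)) * heE
        + hr2
    have heq2 : (2 * c₂ - 1) * (2 * c₂ * (a + α₀) - 1) - (c₂ * ν) ^ 2 = 0 := by
      rcases mul_eq_zero.mp hXE with h | h
      · exact h
      · exact absurd h hE.ne'
    have hd2 : (c₂ * ν) ^ 2 ≤ (2 * c₂ - 1) * (2 * c₂ * (a + α₀) - 1) := by linarith
    have e2 : c₂ • P - Dg =
        Matrix.fromBlocks ((2 * c₂ - 1) • (1 : Matrix (Fin n) (Fin n) ℝ)) ((c₂ * ν) • 1)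
          ((c₂ * ν) • 1)
          ((2 * c₂ * (a + α₀) - 1) • (1 : Matrix (Fin n) (Fin n) ℝ) + (2 * c₂ - 1) • (H - α₀ • 1)) := by
      show c₂ • Matrix.fromBlocks ((2 : ℝ) • (1 : Matrix (Fin n) (Fin n) ℝ)) (ν • 1) (ν • 1)
            ((2 : ℝ) • H + (2 * a) • 1)
          - Matrix.fromBlocks (1 : Matrix (Fin n) (Fin n) ℝ) 0 0 (H + (1 - α₀) • 1) = _
      ext i j
      rcases i with i | i <;> rcases j with j | j <;>
        simp [Matrix.fromBlocks, Matrix.one_apply, Matrix.sub_apply, Matrix.add_apply,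
          Matrix.smul_apply, smul_eq_mul, Matrix.of_apply] <;>
        split_ifs <;> ring
    rw [e2]
    exact block_psd hMpsd hα2 hγ2 hα2 hd2
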